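/- A topological space X is countably compact if and only if for every injective sequence ζ = (x_n) in X whose range is a discrete subspace, there exists a free ultrafilter p on ℕ and a point x ∈ X such that x is the p-limit of ζ. -/

import Mathlib

open Set Filter Topology Function

/-- A free ultrafilter on ℕ: one containing no singleton. -/
def FreeUF (p : Ultrafilter ℕ) : Prop := ∀ n : ℕ, ({n} : Set ℕ) ∉ p

/-- `l` is the `p`-limit of the sequence `x`. -/
def PLim {X : Type*} [TopologicalSpace X] (p : Ultrafilter ℕ) (x : ℕ → X) (l : X) : Prop :=
  Filter.Tendsto x (p : Filter ℕ) (nhds l)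

/-- A βω-space: the closure of any countably infinite discrete subset with compact closure
is homeomorphic to βℕ. -/
def BetaOmegaSpace (X : Type*) [TopologicalSpace X] : Prop :=
  ∀ M : Set X, M.Countable → M.Infinite → DiscreteTopology M → IsCompact (closure M) →
    Nonempty (closure M ≃ₜ StoneCech ℕ)

/-- Keisler–Rudin (Rudin–Keisler) order on ultrafilters on ℕ. -/
def RKle (p q : Ultrafilter ℕ) : Prop := ∃ f : ℕ → ℕ, Ultrafilter.map f q = p

/-- A homogeneous space. -/
def Homogeneous (X : Type*) [TopologicalSpace X] : Prop :=
  ∀ x y : X, ∃ h : X ≃ₜ X, h x = y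

/-- Countable compactness: every countable open cover has a finite subcover. -/
def CountablyCompact (X : Type*) [TopologicalSpace X] : Prop :=
  ∀ U : ℕ → Set X, (∀ n, IsOpen (U n)) → (⋃ n, U n) = Set.univ →
    ∃ t : Finset ℕ, (⋃ n ∈ t, U n) = Set.univ

/-- X is countably compact iff every discrete exact sequence has a `p`-limit for
some free ultrafilter `p`. -/
theorem stmt_9 {X : Type*} [TopologicalSpace X] [T1Space X] :
    CountablyCompact X ↔
      ∀ ζ : ℕ → X, Function.Injective ζ → DiscreteTopology ↥(Set.range ζ) →
        ∃ (p : Ultrafilter ℕ) (x : X), FreeUF p ∧ PLim p ζ x := by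
  constructor
  · -- forward
    intro hcc ζ hinj hdisc
    -- find x ∈ ⋂ n, closure (ζ '' Ici n)
    have hx : ∃ x : X, ∀ n : ℕ, x ∈ closure (ζ '' Set.Ici n) := by
      by_contra h
      push_neg at h
      have hcov : (⋃ n, (closure (ζ '' Set.Ici n))ᶜ) = Set.univ := by
        ext y; simp only [Set.mem_iUnion, Set.mem_compl_iff, Set.mem_univ, iff_true]
        obtain ⟨n, hn⟩ := h y
        exact ⟨n, hn⟩
      obtain ⟨t, ht⟩ := hcc _ (fun n => isClosed_closure.isOpen_compl) hcov
      set N := t.sup id with hN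
      have : ζ N ∈ ⋃ n ∈ t, (closure (ζ '' Set.Ici n))ᶜ := ht ▸ Set.mem_univ _
      simp only [Set.mem_iUnion, Set.mem_compl_iff] at this
      obtain ⟨n, hnt, hn⟩ := this
      exact hn (subset_closure ⟨N, Finset.le_sup (f := id) hnt, rfl⟩)
    obtain ⟨x, hx⟩ := hx
    have hinf : ∀ V ∈ 𝓝 x, {n : ℕ | ζ n ∈ V}.Infinite := by
      intro V hV
      apply Set.infinite_of_not_bddAbove
      rintro ⟨m, hm⟩
      have := hx (m + 1)
      rw [mem_closure_iff_nhds] at this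
      obtain ⟨y, hy1, k, hk, rfl⟩ := this V hV
      have hk' : m + 1 ≤ k := hk
      exact absurd (hm hy1) (by omega)
    have hne : Filter.NeBot ((cofinite : Filter ℕ) ⊓ Filter.comap ζ (𝓝 x)) := by
      rw [Filter.neBot_iff]
      intro hbot
      rw [Filter.inf_eq_bot_iff] at hbot
      obtain ⟨s, hs, v, hv, hsv⟩ := hbot
      obtain ⟨V, hV, hVv⟩ := Filter.mem_comap.mp hv
      have h1 : {n : ℕ | ζ n ∈ V}.Infinite := hinf V hV
      have h2 : {n : ℕ | ζ n ∈ V} ⊆ sᶜ := by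
        intro n hn
        intro hns
        exact Set.notMem_empty n (hsv ▸ Set.mem_inter hns (hVv hn))
      exact (Set.Finite.subset hs h2).not_infinite h1
    haveI := hne
    have hple : (Ultrafilter.of ((cofinite : Filter ℕ) ⊓ Filter.comap ζ (𝓝 x)) : Filter ℕ) ≤
        (cofinite : Filter ℕ) ⊓ Filter.comap ζ (𝓝 x) := Ultrafilter.of_le _
    refine ⟨Ultrafilter.of ((cofinite : Filter ℕ) ⊓ Filter.comap ζ (𝓝 x)), x, ?_, ?_⟩
    · intro n hn
      have h1 : ({n}ᶜ : Set ℕ) ∈ (cofinite : Filter ℕ) := by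
        simp [Set.finite_singleton]
      exact (Ultrafilter.compl_notMem_iff.mpr hn) (hple.trans inf_le_left h1)
    · exact Filter.tendsto_iff_comap.mpr (hple.trans inf_le_right)
  · -- backward
    intro H U hU hcov
    by_contra ht
    push_neg at ht
    -- pick points outside finite unions
    have hpick : ∀ n : ℕ, ∃ y : X, y ∉ ⋃ k ∈ Finset.range (n + 1), U k := by
      intro n
      by_contra h
      push_neg at h
      exact ht (Finset.range (n + 1)) (Set.eq_univ_of_forall h)
    choose x hxn using hpick
    -- if x n ∈ U m then n < m
    have hlt : ∀ m n : ℕ, x n ∈ U m → n < m := by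
      intro m n h
      by_contra hmn
      push_neg at hmn
      exact hxn n (Set.mem_biUnion (Finset.mem_range.mpr (by omega)) h)
    -- preimage of finite set under x is finite
    have hfib : ∀ F : Set X, F.Finite → {j : ℕ | x j ∈ F}.Finite := by
      intro F hF
      have : {j : ℕ | x j ∈ F} ⊆ ⋃ y ∈ F, {j : ℕ | x j = y} := by
        intro j hj; exact Set.mem_biUnion hj rfl
      refine Set.Finite.subset (Set.Finite.biUnion hF fun y _ => ?_) this
      obtain ⟨m, hm⟩ := Set.mem_iUnion.mp (hcov ▸ Set.mem_univ y : y ∈ ⋃ n, U n)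
      refine (Set.finite_Iio m).subset fun j hj => ?_
      have hxy : x j = y := hj
      exact hlt m j (by rw [hxy]; exact hm)
    -- build strictly increasing g with distinct values
    have hstep : ∀ m : ℕ, ∃ j : ℕ, m < j ∧ x j ∉ x '' Set.Iic m := by
      intro m
      have hfin : {j : ℕ | x j ∈ x '' Set.Iic m}.Finite :=
        hfib _ ((Set.finite_Iic m).image x)
      obtain ⟨j, hj1, hj2⟩ := hfin.infinite_compl.exists_gt m
      exact ⟨j, hj2, hj1⟩
    choose step hstep1 hstep2 using hstep
    let g : ℕ → ℕ := fun n => Nat.rec 0 (fun _ prev => step prev) n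
    have hgsucc : ∀ n, g (n + 1) = step (g n) := fun n => rfl
    have hgmono : StrictMono g := strictMono_nat_of_lt_succ fun n => hstep1 (g n)
    set ζ : ℕ → X := fun n => x (g n) with hζ
    have hginj : ∀ m n : ℕ, m ≤ n → ζ (n + 1) ≠ ζ m := by
      intro m n hmn h
      exact hstep2 (g n) ⟨g m, hgmono.monotone hmn, h.symm⟩
    have hinj : Function.Injective ζ := by
      intro a b hab
      rcases lt_trichotomy a b with h | h | h
      · obtain ⟨k, rfl⟩ := Nat.exists_eq_add_of_lt h
        exact absurd hab.symm (by
          have := hginj a (a + k) (by omega)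
          rwa [show a + k + 1 = a + (k + 1) by omega] at this)
      · exact h
      · obtain ⟨k, rfl⟩ := Nat.exists_eq_add_of_lt h
        exact absurd hab (by
          have := hginj b (b + k) (by omega)
          rwa [show b + k + 1 = b + (k + 1) by omega] at this)
    -- ζ n ∈ U m → n < m
    have hζlt : ∀ m n : ℕ, ζ n ∈ U m → n < m := by
      intro m n h
      have h1 := hlt m (g n) h
      have h2 : n ≤ g n := hgmono.le_apply
      omega
    -- discreteness of range ζ
    have hdisc : DiscreteTopology ↥(Set.range ζ) := by
      rw [discreteTopology_subtype_iff]
      rintro y ⟨n, rfl⟩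
      rw [Filter.inf_principal_eq_bot]
      obtain ⟨m, hm⟩ := Set.mem_iUnion.mp (hcov ▸ Set.mem_univ (ζ n) : ζ n ∈ ⋃ k, U k)
      -- neighborhood: U m minus the finite set ζ '' Iio m \ {ζ n}
      have hFfin : (ζ '' Set.Iio m \ {ζ n}).Finite :=
        ((Set.finite_Iio m).image ζ).diff
      have hFclosed : IsClosed (ζ '' Set.Iio m \ {ζ n}) := hFfin.isClosed
      refine mem_nhdsWithin.mpr ⟨U m ∩ (ζ '' Set.Iio m \ {ζ n})ᶜ,
        (hU m).inter hFclosed.isOpen_compl, ⟨hm, fun hc => hc.2 rfl⟩, ?_⟩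
      rintro z ⟨⟨hz1, hz2⟩, hz3⟩ ⟨k, rfl⟩
      exact hz2 ⟨⟨k, hζlt m k hz1, rfl⟩, hz3⟩
    obtain ⟨p, xx, hfree, hlim⟩ := H ζ hinj hdisc
    obtain ⟨m, hm⟩ := Set.mem_iUnion.mp (hcov ▸ Set.mem_univ xx : xx ∈ ⋃ k, U k)
    have hmem : {n : ℕ | ζ n ∈ U m} ∈ p := hlim ((hU m).mem_nhds hm)
    have hfin : {n : ℕ | ζ n ∈ U m}.Finite :=
      (Set.finite_Iio m).subset fun n hn => hζlt m n hn
    obtain ⟨a, _, hpa⟩ := Ultrafilter.eq_pure_of_finite_mem hfin hmem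
    exact hfree a (by rw [hpa]; exact Filter.mem_pure.mpr rfl)
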